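/- Let φ : Σ → ℝ be a potential with Σ_{n≥1} V_n(φ) < ∞ and sup_{x∈Σ} Σ_{s≥1} e^{φ(sx)} < ∞, and let P_G(φ) be its Gurevich pressure. Let (f_n)_{n≥1} be a sequence of functions f_n : Σ → ℝ for which there exist constants 0 < c ≤ C < ∞ with c ≤ f_n(y) ≤ C for all n ≥ 1 and y ∈ Σ. Then for every x ∈ Σ, (1/n) log (L_φ^n f_n)(x) → P_G(φ) as n → ∞. In particular, taking f_n ≡ 1, P_G(φ) = lim_{n→∞} (1/n) log (L_φ^n 1)(x) for every x ∈ Σ. -/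

import Mathlib

open Real Filter Finset

/-- The space `Σ = (ℤ≥1)^ℕ` of sequences of positive integers. -/
abbrev SSeq : Type := ℕ → ℕ+

/-- The left shift `T` on `Σ`. -/
def shift (x : SSeq) : SSeq := fun i => x (i + 1)

/-- Concatenation `sx = (s, x_0, x_1, …)`. -/
def consSeq (s : ℕ+) (x : SSeq) : SSeq := fun i => match i with
  | 0 => s
  | j + 1 => x j

/-- The Birkhoff sum `φ_n = Σ_{k=0}^{n−1} φ∘T^k`. -/
noncomputable def birkhoff (φ : SSeq → ℝ) (n : ℕ) (x : SSeq) : ℝ :=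
  ∑ k ∈ Finset.range n, φ (shift^[k] x)

/-- The set of variations `{|φ(x) − φ(y)| : x_i = y_i for all i < n}`. -/
def varSet (φ : SSeq → ℝ) (n : ℕ) : Set ℝ :=
  {d | ∃ x y : SSeq, (∀ i < n, x i = y i) ∧ d = |φ x - φ y|}

/-- The `n`-th variation `V_n(φ)`. -/
noncomputable def Vn (φ : SSeq → ℝ) (n : ℕ) : ℝ := sSup (varSet φ n)

open scoped ENNReal in
/-- `Z_n(φ,a) = Σ_{x : T^n x = x, x_0 = a} e^{φ_n(x)}`, valued in `[0,∞]`. -/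
noncomputable def Zg (φ : SSeq → ℝ) (a : ℕ+) (n : ℕ) : ℝ≥0∞ :=
  ∑' x : {x : SSeq // shift^[n] x = x ∧ x 0 = a}, ENNReal.ofReal (Real.exp (birkhoff φ n x))

/-- `P` is the Gurevich pressure of `φ`: for every `a`,
`(1/n) log Z_n(φ,a) → P`. -/
def IsGurevich (φ : SSeq → ℝ) (P : ℝ) : Prop :=
  ∀ a : ℕ+, Tendsto (fun n : ℕ => (1 / (n : ℝ)) * Real.log (Zg φ a n).toReal) atTop (nhds P)

open scoped ENNReal in
/-- `sup_{x∈Σ} Σ_{s≥1} e^{φ(sx)}`, valued in `[0,∞]`. -/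
noncomputable def opNorm (φ : SSeq → ℝ) : ℝ≥0∞ :=
  ⨆ x : SSeq, ∑' s : ℕ+, ENNReal.ofReal (Real.exp (φ (consSeq s x)))

/-- The transfer (Ruelle–Perron–Frobenius) operator `(L_φ f)(x) = Σ_{s≥1} e^{φ(sx)} f(sx)`. -/
noncomputable def Lop (φ : SSeq → ℝ) (f : SSeq → ℝ) : SSeq → ℝ :=
  fun x => ∑' s : ℕ+, Real.exp (φ (consSeq s x)) * f (consSeq s x)

-- basic lemmas
lemma shift_iter (x : SSeq) (k i : ℕ) : shift^[k] x i = x (i + k) := by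
  induction k generalizing x i with
  | zero => rfl
  | succ k ih =>
    rw [Function.iterate_succ_apply, ih]
    simp [shift, Nat.add_assoc, Nat.add_comm 1 k]

lemma shift_consSeq (s : ℕ+) (x : SSeq) : shift (consSeq s x) = x := by
  funext i; rfl

lemma birkhoff_succ_front (φ : SSeq → ℝ) (n : ℕ) (x : SSeq) :
    birkhoff φ (n + 1) x = φ x + birkhoff φ n (shift x) := by
  unfold birkhoff
  rw [Finset.sum_range_succ']
  simp [Function.iterate_succ_apply, add_comm]

lemma zero_mem_varSet (φ : SSeq → ℝ) (n : ℕ) : (0:ℝ) ∈ varSet φ n :=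
  ⟨fun _ => 1, fun _ => 1, fun _ _ => rfl, by simp⟩

lemma Vn_nonneg (φ : SSeq → ℝ) (n : ℕ) (h : BddAbove (varSet φ n)) : 0 ≤ Vn φ n :=
  le_csSup h (zero_mem_varSet φ n)

lemma abs_sub_le_Vn (φ : SSeq → ℝ) (n : ℕ) (h : BddAbove (varSet φ n))
    (x y : SSeq) (hxy : ∀ i < n, x i = y i) : |φ x - φ y| ≤ Vn φ n :=
  le_csSup h ⟨x, y, hxy, rfl⟩


section Distortion
variable {φ : SSeq → ℝ} (hbdd : ∀ n : ℕ, 1 ≤ n → BddAbove (varSet φ n))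
  (hsum : Summable fun n : ℕ => Vn φ (n + 1))
include hbdd hsum

lemma Vn_le_B (m : ℕ) : Vn φ (m + 1) ≤ ∑' n : ℕ, Vn φ (n + 1) :=
  Summable.le_tsum hsum m (fun k _ => Vn_nonneg φ (k+1) (hbdd (k+1) (Nat.succ_le_succ (Nat.zero_le k))))

lemma sum_Vn_le_B (n : ℕ) : ∑ k ∈ Finset.range n, Vn φ (k + 1) ≤ ∑' n : ℕ, Vn φ (n + 1) :=
  Summable.sum_le_tsum _ (fun k _ => Vn_nonneg φ (k+1) (hbdd (k+1) (Nat.succ_le_succ (Nat.zero_le k)))) hsum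

lemma birkhoff_dist (n : ℕ) (x y : SSeq) (hxy : ∀ i < n, x i = y i) :
    birkhoff φ n x - birkhoff φ n y ≤ ∑' n : ℕ, Vn φ (n + 1) := by
  have key : ∀ k < n, φ (shift^[k] x) - φ (shift^[k] y) ≤ Vn φ (n - k) := by
    intro k hk
    have h1 : ∀ i < n - k, shift^[k] x i = shift^[k] y i := by
      intro i hi
      rw [shift_iter, shift_iter]
      exact hxy _ (by omega)
    calc φ (shift^[k] x) - φ (shift^[k] y) ≤ |φ (shift^[k] x) - φ (shift^[k] y)| := le_abs_self _
      _ ≤ Vn φ (n - k) := abs_sub_le_Vn φ (n-k) (hbdd (n-k) (by omega)) _ _ h1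
  calc birkhoff φ n x - birkhoff φ n y
      = ∑ k ∈ Finset.range n, (φ (shift^[k] x) - φ (shift^[k] y)) := by
        unfold birkhoff; rw [Finset.sum_sub_distrib]
    _ ≤ ∑ k ∈ Finset.range n, Vn φ (n - k) :=
        Finset.sum_le_sum (fun k hk => key k (Finset.mem_range.mp hk))
    _ = ∑ k ∈ Finset.range n, Vn φ (k + 1) := by
        rw [← Finset.sum_range_reflect]
        apply Finset.sum_congr rfl
        intro k hk
        have : k < n := Finset.mem_range.mp hk
        congr 1; omega
    _ ≤ ∑' n : ℕ, Vn φ (n + 1) := sum_Vn_le_B hbdd hsum n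

end Distortion


open scoped ENNReal

/-- Prepend a word of length `n` to a sequence. -/
def wordApp {n : ℕ} (w : Fin n → ℕ+) (x : SSeq) : SSeq :=
  fun i => if h : i < n then w ⟨i, h⟩ else x (i - n)

lemma wordApp_zero (w : Fin 0 → ℕ+) (x : SSeq) : wordApp w x = x := by
  funext i; simp [wordApp]

lemma wordApp_lt {n : ℕ} (w : Fin n → ℕ+) (x : SSeq) (i : ℕ) (h : i < n) :
    wordApp w x i = w ⟨i, h⟩ := by simp [wordApp, h]

lemma consSeq_wordApp {n : ℕ} (s : ℕ+) (w : Fin n → ℕ+) (x : SSeq) :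
    consSeq s (wordApp w x) = wordApp (Fin.cons s w) x := by
  funext i
  match i with
  | 0 => simp [consSeq, wordApp]
  | j + 1 =>
    simp only [consSeq, wordApp]
    by_cases h : j < n
    · simp [h, Nat.succ_lt_succ h, Fin.cons]
    · have h2 : ¬ (j + 1 < n + 1) := by omega
      simp [h, h2]

/-- Periodic extension of a word of positive length. -/
def per {n : ℕ} (hn : 0 < n) (w : Fin n → ℕ+) : SSeq :=
  fun i => w ⟨i % n, Nat.mod_lt i hn⟩

lemma shift_iter_per {n : ℕ} (hn : 0 < n) (w : Fin n → ℕ+) :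
    shift^[n] (per hn w) = per hn w := by
  funext i
  rw [shift_iter]
  simp [per, Nat.add_mod_right]

lemma per_agree {n : ℕ} (hn : 0 < n) (w : Fin n → ℕ+) (i : ℕ) (h : i < n) :
    per hn w i = w ⟨i, h⟩ := by
  simp [per, Nat.mod_eq_of_lt h]

section WordSums
variable (φ : SSeq → ℝ)

/-- ENNReal-valued word sum for the iterated transfer operator. -/
noncomputable def wsum (n : ℕ) (f : SSeq → ℝ) (x : SSeq) : ℝ≥0∞ :=
  ∑' w : Fin n → ℕ+,
    ENNReal.ofReal (Real.exp (birkhoff φ n (wordApp w x)) * f (wordApp w x))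

noncomputable def esum (n : ℕ) (x : SSeq) : ℝ≥0∞ :=
  ∑' w : Fin n → ℕ+, ENNReal.ofReal (Real.exp (birkhoff φ n (wordApp w x)))

lemma single_le_opNorm (x : SSeq) :
    ∑' s : ℕ+, ENNReal.ofReal (Real.exp (φ (consSeq s x))) ≤ opNorm φ :=
  le_iSup (fun y => ∑' s : ℕ+, ENNReal.ofReal (Real.exp (φ (consSeq s y)))) x

lemma tsum_fin_succ (g : (Fin (n+1) → ℕ+) → ℝ≥0∞) :
    ∑' w : Fin (n+1) → ℕ+, g w = ∑' (w : Fin n → ℕ+) (s : ℕ+), g (Fin.cons s w) := by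
  rw [← Equiv.tsum_eq (Fin.consEquiv (fun _ : Fin (n+1) => ℕ+)) g, ENNReal.tsum_prod']
  rw [ENNReal.tsum_comm]
  rfl

lemma esum_succ (n : ℕ) (x : SSeq) :
    esum φ (n+1) x = ∑' (w : Fin n → ℕ+) (s : ℕ+),
      ENNReal.ofReal (Real.exp (φ (consSeq s (wordApp w x)))) *
        ENNReal.ofReal (Real.exp (birkhoff φ n (wordApp w x))) := by
  rw [esum, tsum_fin_succ]
  congr 1; funext w; congr 1; funext s
  rw [← consSeq_wordApp, birkhoff_succ_front, shift_consSeq, Real.exp_add,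
    ENNReal.ofReal_mul (le_of_lt (Real.exp_pos _))]

lemma esum_le_pow (n : ℕ) (x : SSeq) : esum φ n x ≤ (opNorm φ) ^ n := by
  induction n generalizing x with
  | zero =>
    rw [esum, tsum_eq_single (fun i => i.elim0) (by intro w h; exact absurd (funext fun i => i.elim0) h)]
    simp [birkhoff, wordApp_zero]
  | succ n ih =>
    rw [esum_succ]
    calc ∑' (w : Fin n → ℕ+) (s : ℕ+),
        ENNReal.ofReal (Real.exp (φ (consSeq s (wordApp w x)))) *
          ENNReal.ofReal (Real.exp (birkhoff φ n (wordApp w x)))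
        ≤ ∑' (w : Fin n → ℕ+), opNorm φ * ENNReal.ofReal (Real.exp (birkhoff φ n (wordApp w x))) := by
          apply ENNReal.tsum_le_tsum; intro w
          rw [ENNReal.tsum_mul_right]
          exact mul_le_mul_left (single_le_opNorm φ _) _
      _ = opNorm φ * esum φ n x := by rw [ENNReal.tsum_mul_left]; rfl
      _ ≤ opNorm φ * opNorm φ ^ n := mul_le_mul_right (ih x) _
      _ = opNorm φ ^ (n+1) := by ring

end WordSums

section LopFormula
variable {φ : SSeq → ℝ} (hnorm : opNorm φ ≠ ⊤)
include hnorm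

lemma summable_exp (x : SSeq) : Summable fun s : ℕ+ => Real.exp (φ (consSeq s x)) := by
  have h := ENNReal.summable_toReal (f := fun s : ℕ+ => ENNReal.ofReal (Real.exp (φ (consSeq s x))))
    (by exact ne_top_of_le_ne_top hnorm (single_le_opNorm φ x))
  simpa [ENNReal.toReal_ofReal (le_of_lt (Real.exp_pos _))] using h

lemma tsum_exp_le (x : SSeq) :
    ∑' s : ℕ+, Real.exp (φ (consSeq s x)) ≤ (opNorm φ).toReal := by
  have h1 : ENNReal.ofReal (∑' s : ℕ+, Real.exp (φ (consSeq s x))) ≤ opNorm φ := by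
    rw [ENNReal.ofReal_tsum_of_nonneg (fun s => le_of_lt (Real.exp_pos _)) (summable_exp hnorm x)]
    exact single_le_opNorm φ x
  have := ENNReal.toReal_mono hnorm h1
  rwa [ENNReal.toReal_ofReal (tsum_nonneg (fun s => le_of_lt (Real.exp_pos _)))] at this

lemma summable_term {f : SSeq → ℝ} {K : ℝ} (hf0 : ∀ y, 0 ≤ f y) (hfK : ∀ y, f y ≤ K) (x : SSeq) :
    Summable fun s : ℕ+ => Real.exp (φ (consSeq s x)) * f (consSeq s x) := by
  apply Summable.of_nonneg_of_le (fun s => mul_nonneg (le_of_lt (Real.exp_pos _)) (hf0 _))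
    (fun s => mul_le_mul_of_nonneg_left (hfK _) (le_of_lt (Real.exp_pos _)))
    ((summable_exp hnorm x).mul_right K)

lemma Lop_nonneg {f : SSeq → ℝ} (hf0 : ∀ y, 0 ≤ f y) (x : SSeq) : 0 ≤ Lop φ f x :=
  tsum_nonneg (fun s => mul_nonneg (le_of_lt (Real.exp_pos _)) (hf0 _))

lemma Lop_le {f : SSeq → ℝ} {K : ℝ} (hf0 : ∀ y, 0 ≤ f y) (hfK : ∀ y, f y ≤ K) (hK : 0 ≤ K)
    (x : SSeq) : Lop φ f x ≤ K * (opNorm φ).toReal := by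
  calc Lop φ f x ≤ ∑' s : ℕ+, Real.exp (φ (consSeq s x)) * K := by
        apply Summable.tsum_le_tsum _ (summable_term hnorm hf0 hfK x) ((summable_exp hnorm x).mul_right K)
        exact fun s => mul_le_mul_of_nonneg_left (hfK _) (le_of_lt (Real.exp_pos _))
    _ = (∑' s : ℕ+, Real.exp (φ (consSeq s x))) * K := tsum_mul_right
    _ ≤ (opNorm φ).toReal * K := mul_le_mul_of_nonneg_right (tsum_exp_le hnorm x) hK
    _ = K * (opNorm φ).toReal := mul_comm _ _

lemma ofReal_Lop {f : SSeq → ℝ} {K : ℝ} (hf0 : ∀ y, 0 ≤ f y) (hfK : ∀ y, f y ≤ K) (x : SSeq) :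
    ENNReal.ofReal (Lop φ f x)
      = ∑' s : ℕ+, ENNReal.ofReal (Real.exp (φ (consSeq s x)) * f (consSeq s x)) := by
  exact ENNReal.ofReal_tsum_of_nonneg
    (fun s => mul_nonneg (le_of_lt (Real.exp_pos _)) (hf0 _)) (summable_term hnorm hf0 hfK x)

lemma Lop_iter_formula (f : SSeq → ℝ) (K : ℝ) (hf0 : ∀ y, 0 ≤ f y) (hfK : ∀ y, f y ≤ K)
    (n : ℕ) (x : SSeq) :
    0 ≤ (Lop φ)^[n] f x ∧ ENNReal.ofReal ((Lop φ)^[n] f x) = wsum φ n f x := by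
  induction n generalizing f K x with
  | zero =>
    refine ⟨hf0 x, ?_⟩
    rw [wsum,
      tsum_eq_single (fun i => i.elim0) (by intro w h; exact absurd (funext fun i => i.elim0) h)]
    simp [birkhoff, wordApp_zero]
  | succ n ih =>
    have hK : 0 ≤ K := le_trans (hf0 (fun _ => 1)) (hfK _)
    have h0 : ∀ y, 0 ≤ Lop φ f y := Lop_nonneg hnorm hf0
    have h1 : ∀ y, Lop φ f y ≤ K * (opNorm φ).toReal := Lop_le hnorm hf0 hfK hK
    rw [Function.iterate_succ_apply]
    refine ⟨(ih (Lop φ f) (K * (opNorm φ).toReal) h0 h1 x).1, ?_⟩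
    rw [(ih (Lop φ f) (K * (opNorm φ).toReal) h0 h1 x).2]
    rw [show wsum φ (n+1) f x = ∑' (w : Fin n → ℕ+) (s : ℕ+),
        ENNReal.ofReal (Real.exp (birkhoff φ (n+1) (wordApp (Fin.cons s w) x)) *
          f (wordApp (Fin.cons s w) x)) from tsum_fin_succ _]
    rw [wsum]
    congr 1; funext w
    have key : ∀ s : ℕ+,
        ENNReal.ofReal (Real.exp (birkhoff φ (n+1) (wordApp (Fin.cons s w) x)) *
          f (wordApp (Fin.cons s w) x))
        = ENNReal.ofReal (Real.exp (birkhoff φ n (wordApp w x))) *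
          ENNReal.ofReal (Real.exp (φ (consSeq s (wordApp w x))) * f (consSeq s (wordApp w x))) := by
      intro s
      rw [← consSeq_wordApp, birkhoff_succ_front, shift_consSeq, Real.exp_add]
      rw [← ENNReal.ofReal_mul (le_of_lt (Real.exp_pos _))]
      congr 1; ring
    simp only [key]
    rw [ENNReal.tsum_mul_left, ← ofReal_Lop hnorm hf0 hfK (wordApp w x),
      ← ENNReal.ofReal_mul (le_of_lt (Real.exp_pos _))]

end LopFormula

section Compare
variable {φ : SSeq → ℝ} (hbdd : ∀ n : ℕ, 1 ≤ n → BddAbove (varSet φ n))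
  (hsum : Summable fun n : ℕ => Vn φ (n + 1))

lemma periodic_mod {m : ℕ} (hm : 0 < m) {x : SSeq} (hx : shift^[m] x = x) (i : ℕ) :
    x i = x (i % m) := by
  have step : ∀ j, x (j + m) = x j := by
    intro j
    conv_rhs => rw [← hx]
    rw [shift_iter]
  have gen : ∀ k j, x (j + m * k) = x j := by
    intro k
    induction k with
    | zero => simp
    | succ k ih => intro j; rw [Nat.mul_succ, ← Nat.add_assoc, step, ih]
  conv_lhs => rw [← Nat.mod_add_div i m]
  exact gen _ _

omit hbdd hsum in
lemma wsum_le_ofReal_mul {f : SSeq → ℝ} {C : ℝ} (hC : 0 ≤ C) (hfC : ∀ y, f y ≤ C)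
    (n : ℕ) (x : SSeq) : wsum φ n f x ≤ ENNReal.ofReal C * esum φ n x := by
  rw [esum, ← ENNReal.tsum_mul_left]
  apply ENNReal.tsum_le_tsum
  intro w
  rw [← ENNReal.ofReal_mul hC]
  apply ENNReal.ofReal_le_ofReal
  calc Real.exp (birkhoff φ n (wordApp w x)) * f (wordApp w x)
      ≤ Real.exp (birkhoff φ n (wordApp w x)) * C :=
        mul_le_mul_of_nonneg_left (hfC _) (le_of_lt (Real.exp_pos _))
    _ = C * Real.exp (birkhoff φ n (wordApp w x)) := mul_comm _ _

omit hbdd hsum in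
lemma ofReal_mul_le_wsum {f : SSeq → ℝ} {c : ℝ} (hc : 0 ≤ c) (hfc : ∀ y, c ≤ f y)
    (n : ℕ) (x : SSeq) : ENNReal.ofReal c * esum φ n x ≤ wsum φ n f x := by
  rw [esum, ← ENNReal.tsum_mul_left]
  apply ENNReal.tsum_le_tsum
  intro w
  rw [← ENNReal.ofReal_mul hc]
  apply ENNReal.ofReal_le_ofReal
  calc c * Real.exp (birkhoff φ n (wordApp w x))
      = Real.exp (birkhoff φ n (wordApp w x)) * c := mul_comm _ _
    _ ≤ Real.exp (birkhoff φ n (wordApp w x)) * f (wordApp w x) :=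
        mul_le_mul_of_nonneg_left (hfc _) (le_of_lt (Real.exp_pos _))

include hbdd hsum in
/-- Upper bound: `Z_{n+1}(φ,1) ≤ e^B · esum_{n+1}(x)`. -/
lemma Zg_le_esum (n : ℕ) (x : SSeq) :
    Zg φ 1 (n+1) ≤ ENNReal.ofReal (Real.exp (∑' m : ℕ, Vn φ (m + 1))) * esum φ (n+1) x := by
  set B := ∑' m : ℕ, Vn φ (m + 1) with hB
  set P := {y : SSeq // shift^[n+1] y = y ∧ y 0 = 1}
  have hinj : Function.Injective (fun p : P => (fun j : Fin (n+1) => p.1 j : Fin (n+1) → ℕ+)) := by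
    intro p q h
    apply Subtype.ext
    funext i
    have hp := periodic_mod (Nat.succ_pos n) p.2.1 i
    have hq := periodic_mod (Nat.succ_pos n) q.2.1 i
    rw [hp, hq]
    exact congrFun h ⟨i % (n+1), Nat.mod_lt i (Nat.succ_pos n)⟩
  calc Zg φ 1 (n+1)
      ≤ ∑' p : P, ENNReal.ofReal (Real.exp B) *
          ENNReal.ofReal (Real.exp (birkhoff φ (n+1) (wordApp (fun j : Fin (n+1) => p.1 j) x))) := by
        apply ENNReal.tsum_le_tsum
        intro p
        rw [← ENNReal.ofReal_mul (le_of_lt (Real.exp_pos _)), ← Real.exp_add]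
        apply ENNReal.ofReal_le_ofReal
        apply Real.exp_le_exp.mpr
        have hagree : ∀ i < n + 1, p.1 i = wordApp (fun j : Fin (n+1) => p.1 j) x i := by
          intro i hi
          rw [wordApp_lt _ _ _ hi]
        have := birkhoff_dist hbdd hsum (n+1) p.1 (wordApp (fun j : Fin (n+1) => p.1 j) x) hagree
        linarith
    _ = ENNReal.ofReal (Real.exp B) * ∑' p : P,
          ENNReal.ofReal (Real.exp (birkhoff φ (n+1) (wordApp (fun j : Fin (n+1) => p.1 j) x))) :=
        ENNReal.tsum_mul_left
    _ ≤ ENNReal.ofReal (Real.exp B) * esum φ (n+1) x := by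
        apply mul_le_mul_right
        exact ENNReal.tsum_comp_le_tsum_of_injective hinj
          (fun w => ENNReal.ofReal (Real.exp (birkhoff φ (n+1) (wordApp w x))))

include hbdd hsum in
/-- Lower bound: `e^{φ(1x)} e^{-2B} · esum_n(x) ≤ Z_{n+1}(φ,1)`. -/
lemma esum_le_Zg (n : ℕ) (x : SSeq) :
    ENNReal.ofReal (Real.exp (φ (consSeq 1 x) - 2 * ∑' m : ℕ, Vn φ (m + 1))) * esum φ n x
      ≤ Zg φ 1 (n+1) := by
  set B := ∑' m : ℕ, Vn φ (m + 1) with hB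
  set P := {y : SSeq // shift^[n+1] y = y ∧ y 0 = 1}
  set j : (Fin n → ℕ+) → P := fun w =>
    ⟨per (Nat.succ_pos n) (Fin.cons 1 w), shift_iter_per _ _, by
      rw [per_agree (Nat.succ_pos n) _ 0 (Nat.succ_pos n)]; rfl⟩ with hj
  have hinj : Function.Injective j := by
    intro w w' h
    funext i
    have h1 := congrFun (congrArg Subtype.val h) (i.1 + 1)
    rw [hj] at h1
    simp only [per_agree (Nat.succ_pos n) _ (i.1+1) (by omega : i.1 + 1 < n + 1)] at h1
    have : (⟨i.1+1, by omega⟩ : Fin (n+1)) = Fin.succ ⟨i.1, i.2⟩ := rfl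
    rw [this, Fin.cons_succ, Fin.cons_succ] at h1
    simpa using h1
  have key : ∀ w : Fin n → ℕ+,
      ENNReal.ofReal (Real.exp (φ (consSeq 1 x) - 2 * B)) *
        ENNReal.ofReal (Real.exp (birkhoff φ n (wordApp w x)))
        ≤ ENNReal.ofReal (Real.exp (birkhoff φ (n+1) ((j w).1))) := by
    intro w
    rw [← ENNReal.ofReal_mul (le_of_lt (Real.exp_pos _)), ← Real.exp_add]
    apply ENNReal.ofReal_le_ofReal
    apply Real.exp_le_exp.mpr
    rw [birkhoff_succ_front]
    have d1 : birkhoff φ n (wordApp w x) - birkhoff φ n (shift (j w).1) ≤ B := by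
      apply birkhoff_dist hbdd hsum
      intro i hi
      show wordApp w x i = per (Nat.succ_pos n) (Fin.cons 1 w) (i+1)
      rw [wordApp_lt _ _ _ hi, per_agree (Nat.succ_pos n) _ (i+1) (by omega)]
      have : (⟨i+1, by omega⟩ : Fin (n+1)) = Fin.succ ⟨i, hi⟩ := rfl
      rw [this, Fin.cons_succ]
    have d2 : φ (consSeq 1 x) - φ ((j w).1) ≤ B := by
      have h1 : |φ (consSeq 1 x) - φ ((j w).1)| ≤ Vn φ 1 := by
        apply abs_sub_le_Vn φ 1 (hbdd 1 le_rfl)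
        intro i hi
        interval_cases i
        show (1 : ℕ+) = per (Nat.succ_pos n) (Fin.cons 1 w) 0
        rw [per_agree (Nat.succ_pos n) _ 0 (Nat.succ_pos n)]
        rfl
      have h2 : Vn φ 1 ≤ B := Vn_le_B hbdd hsum 0
      have := le_trans (le_abs_self _) (le_trans h1 h2)
      linarith
    linarith
  calc ENNReal.ofReal (Real.exp (φ (consSeq 1 x) - 2 * B)) * esum φ n x
      = ∑' w : Fin n → ℕ+, ENNReal.ofReal (Real.exp (φ (consSeq 1 x) - 2 * B)) *
          ENNReal.ofReal (Real.exp (birkhoff φ n (wordApp w x))) := by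
        rw [esum, ENNReal.tsum_mul_left]
    _ ≤ ∑' w : Fin n → ℕ+, ENNReal.ofReal (Real.exp (birkhoff φ (n+1) ((j w).1))) :=
        ENNReal.tsum_le_tsum key
    _ ≤ ∑' p : P, ENNReal.ofReal (Real.exp (birkhoff φ (n+1) (p.1))) :=
        ENNReal.tsum_comp_le_tsum_of_injective hinj
          (fun p : P => ENNReal.ofReal (Real.exp (birkhoff φ (n+1) (p.1))))
    _ = Zg φ 1 (n+1) := rfl

end Compare

section Main
variable {φ : SSeq → ℝ} (hbdd : ∀ n : ℕ, 1 ≤ n → BddAbove (varSet φ n))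
  (hsum : Summable fun n : ℕ => Vn φ (n + 1)) (hnorm : opNorm φ ≠ ⊤)

omit hbdd hsum hnorm in
lemma esum_pos (n : ℕ) (x : SSeq) : 0 < esum φ n x :=
  lt_of_lt_of_le (by positivity)
    (ENNReal.le_tsum (f := fun w : Fin n → ℕ+ =>
      ENNReal.ofReal (Real.exp (birkhoff φ n (wordApp w x)))) (fun _ => 1))

omit hbdd hsum in
include hnorm in
lemma esum_ne_top (n : ℕ) (x : SSeq) : esum φ n x ≠ ⊤ :=
  ne_top_of_le_ne_top (ENNReal.pow_ne_top hnorm) (esum_le_pow φ n x)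

include hbdd hsum hnorm in
lemma main_aux (P : ℝ) (hP : IsGurevich φ P)
    (f : ℕ → SSeq → ℝ) (c C : ℝ) (hc : 0 < c) (hcC : c ≤ C)
    (hf : ∀ n : ℕ, 1 ≤ n → ∀ y : SSeq, c ≤ f n y ∧ f n y ≤ C) (x : SSeq) :
    Tendsto (fun n : ℕ => (1 / (n : ℝ)) * Real.log ((Lop φ)^[n] (f n) x))
      atTop (nhds P) := by
  set B := ∑' m : ℕ, Vn φ (m + 1) with hB
  set ε := φ (consSeq 1 x) with hε
  set z : ℕ → ℝ := fun n => (Zg φ 1 n).toReal with hz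
  set e : ℕ → ℝ := fun n => (esum φ n x).toReal with he
  have hC : (0:ℝ) < C := lt_of_lt_of_le hc hcC
  -- basic positivity/finiteness
  have hepos : ∀ n, 0 < e n := fun n =>
    ENNReal.toReal_pos (ne_of_gt (esum_pos n x)) (esum_ne_top hnorm n x)
  have hZne : ∀ n, Zg φ 1 (n+1) ≠ ⊤ := fun n =>
    ne_top_of_le_ne_top
      (ENNReal.mul_ne_top ENNReal.ofReal_ne_top (esum_ne_top hnorm (n+1) x))
      (Zg_le_esum hbdd hsum n x)
  have hZpos : ∀ n, 0 < z (n+1) := by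
    intro n
    apply ENNReal.toReal_pos _ (hZne n)
    intro h0
    have := esum_le_Zg hbdd hsum n x
    rw [h0, le_zero_iff, mul_eq_zero] at this
    rcases this with h | h
    · exact absurd h (by positivity)
    · exact absurd h (ne_of_gt (esum_pos n x))
  -- the key log inequalities for n ≥ 1
  have key : ∀ n : ℕ, 1 ≤ n →
      Real.log c + Real.log (z n) - B ≤ Real.log ((Lop φ)^[n] (f n) x) ∧
      Real.log ((Lop φ)^[n] (f n) x) ≤ Real.log C + Real.log (z (n+1)) - ε + 2 * B := by
    intro n hn
    have hf0 : ∀ y, 0 ≤ f n y := fun y => le_of_lt (lt_of_lt_of_le hc (hf n hn y).1)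
    have hfC : ∀ y, f n y ≤ C := fun y => (hf n hn y).2
    have hfc : ∀ y, c ≤ f n y := fun y => (hf n hn y).1
    obtain ⟨hLnn, hLfor⟩ := Lop_iter_formula hnorm (f n) C hf0 hfC n x
    set S := wsum φ n (f n) x with hS
    have hSne : S ≠ ⊤ :=
      ne_top_of_le_ne_top
        (ENNReal.mul_ne_top ENNReal.ofReal_ne_top (esum_ne_top hnorm n x))
        (wsum_le_ofReal_mul (le_of_lt hC) hfC n x)
    have hLS : (Lop φ)^[n] (f n) x = S.toReal := by
      rw [← hLfor, ENNReal.toReal_ofReal hLnn]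
    -- real inequalities
    have A1 : c * e n ≤ S.toReal := by
      have := ENNReal.toReal_mono hSne (ofReal_mul_le_wsum (le_of_lt hc) hfc n x)
      rwa [ENNReal.toReal_mul, ENNReal.toReal_ofReal (le_of_lt hc)] at this
    have A2 : S.toReal ≤ C * e n := by
      have := ENNReal.toReal_mono
        (ENNReal.mul_ne_top ENNReal.ofReal_ne_top (esum_ne_top hnorm n x))
        (wsum_le_ofReal_mul (le_of_lt hC) hfC n x)
      rwa [ENNReal.toReal_mul, ENNReal.toReal_ofReal (le_of_lt hC)] at this
    have A3 : z n ≤ Real.exp B * e n := by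
      obtain ⟨m, rfl⟩ : ∃ m, n = m + 1 := ⟨n - 1, by omega⟩
      have := ENNReal.toReal_mono
        (ENNReal.mul_ne_top ENNReal.ofReal_ne_top (esum_ne_top hnorm (m+1) x))
        (Zg_le_esum hbdd hsum m x)
      rwa [ENNReal.toReal_mul, ENNReal.toReal_ofReal (le_of_lt (Real.exp_pos _))] at this
    have A4 : Real.exp (ε - 2 * B) * e n ≤ z (n+1) := by
      have := ENNReal.toReal_mono (hZne n) (esum_le_Zg hbdd hsum n x)
      rwa [ENNReal.toReal_mul, ENNReal.toReal_ofReal (le_of_lt (Real.exp_pos _))] at this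
    have hSpos : 0 < S.toReal := lt_of_lt_of_le (mul_pos hc (hepos n)) A1
    have hzn : 0 < z n := by
      obtain ⟨m, rfl⟩ : ∃ m, n = m + 1 := ⟨n - 1, by omega⟩
      exact hZpos m
    constructor
    · rw [hLS]
      have l1 : Real.log (z n) ≤ B + Real.log (e n) := by
        have := Real.log_le_log hzn A3
        rwa [Real.log_mul (Real.exp_ne_zero _) (ne_of_gt (hepos n)), Real.log_exp] at this
      have l2 : Real.log (c * e n) ≤ Real.log S.toReal :=
        Real.log_le_log (mul_pos hc (hepos n)) A1
      rw [Real.log_mul (ne_of_gt hc) (ne_of_gt (hepos n))] at l2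
      linarith
    · rw [hLS]
      have l1 : (ε - 2 * B) + Real.log (e n) ≤ Real.log (z (n+1)) := by
        have := Real.log_le_log (mul_pos (Real.exp_pos _) (hepos n)) A4
        rwa [Real.log_mul (Real.exp_ne_zero _) (ne_of_gt (hepos n)), Real.log_exp] at this
      have l2 : Real.log S.toReal ≤ Real.log (C * e n) := Real.log_le_log hSpos A2
      rw [Real.log_mul (ne_of_gt hC) (ne_of_gt (hepos n))] at l2
      linarith
  -- squeeze
  have hlow : Tendsto (fun n : ℕ => (1 / (n:ℝ)) * (Real.log c - B) + (1 / (n:ℝ)) * Real.log (z n))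
      atTop (nhds P) := by
    have h1 : Tendsto (fun n : ℕ => (1 / (n:ℝ)) * (Real.log c - B)) atTop (nhds 0) := by
      simpa using tendsto_one_div_atTop_nhds_zero_nat.mul_const (Real.log c - B)
    simpa using h1.add (hP 1)
  have hhigh : Tendsto (fun n : ℕ =>
      (1 / (n:ℝ)) * (Real.log C - ε + 2 * B) + (1 / (n:ℝ)) * Real.log (z (n+1)))
      atTop (nhds P) := by
    have h1 : Tendsto (fun n : ℕ => (1 / (n:ℝ)) * (Real.log C - ε + 2 * B)) atTop (nhds 0) := by
      simpa using tendsto_one_div_atTop_nhds_zero_nat.mul_const (Real.log C - ε + 2 * B)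
    have h2 : Tendsto (fun n : ℕ => (1 / ((n:ℝ)+1)) * Real.log (z (n+1))) atTop (nhds P) := by
      have := (hP 1).comp (tendsto_add_atTop_nat 1)
      refine Tendsto.congr (fun n => ?_) this
      simp [Function.comp]
      exact Or.inl rfl
    have h3 : Tendsto (fun n : ℕ => ((n:ℝ)+1) / n) atTop (nhds 1) := by
      have : Tendsto (fun n : ℕ => 1 + 1/(n:ℝ)) atTop (nhds (1 + 0)) :=
        tendsto_const_nhds.add tendsto_one_div_atTop_nhds_zero_nat
      apply Tendsto.congr' _ (by simpa using this)
      filter_upwards [eventually_ge_atTop 1] with n hn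
      have : (n:ℝ) ≠ 0 := Nat.cast_ne_zero.mpr (by omega)
      field_simp
    have h4 : Tendsto (fun n : ℕ => (((n:ℝ)+1)/n) * ((1 / ((n:ℝ)+1)) * Real.log (z (n+1))))
        atTop (nhds P) := by simpa using h3.mul h2
    have h5 : Tendsto (fun n : ℕ => (1 / (n:ℝ)) * Real.log (z (n+1))) atTop (nhds P) := by
      apply Tendsto.congr' _ h4
      filter_upwards [eventually_ge_atTop 1] with n hn
      have hn0 : (n:ℝ) ≠ 0 := Nat.cast_ne_zero.mpr (by omega)
      have hn1 : (n:ℝ) + 1 ≠ 0 := by positivity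
      field_simp
    simpa using h1.add h5
  apply tendsto_of_tendsto_of_tendsto_of_le_of_le' hlow hhigh
  · filter_upwards [eventually_ge_atTop 1] with n hn
    have hn0 : (0:ℝ) < 1 / (n:ℝ) := by
      have : (0:ℝ) < (n:ℝ) := Nat.cast_pos.mpr (by omega)
      positivity
    have := (key n hn).1
    calc (1 / (n:ℝ)) * (Real.log c - B) + (1 / (n:ℝ)) * Real.log (z n)
        = (1 / (n:ℝ)) * (Real.log c + Real.log (z n) - B) := by ring
      _ ≤ (1 / (n:ℝ)) * Real.log ((Lop φ)^[n] (f n) x) :=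
        mul_le_mul_of_nonneg_left this (le_of_lt hn0)
  · filter_upwards [eventually_ge_atTop 1] with n hn
    have hn0 : (0:ℝ) < 1 / (n:ℝ) := by
      have : (0:ℝ) < (n:ℝ) := Nat.cast_pos.mpr (by omega)
      positivity
    have := (key n hn).2
    calc (1 / (n:ℝ)) * Real.log ((Lop φ)^[n] (f n) x)
        ≤ (1 / (n:ℝ)) * (Real.log C + Real.log (z (n+1)) - ε + 2 * B) :=
          mul_le_mul_of_nonneg_left this (le_of_lt hn0)
      _ = (1 / (n:ℝ)) * (Real.log C - ε + 2 * B) + (1 / (n:ℝ)) * Real.log (z (n+1)) := by ring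

end Main

/-- If `φ` has summable variations and finite sup-norm for the transfer operator, and
`(f_n)` is uniformly bounded away from `0` and `∞`, then for every `x`,
`(1/n) log (L_φ^n f_n)(x) → P_G(φ)`; in particular with `f_n ≡ 1`. -/
theorem gurevich_pressure_via_transfer_operator (φ : SSeq → ℝ)
    (hbdd : ∀ n : ℕ, 1 ≤ n → BddAbove (varSet φ n))
    (hsum : Summable fun n : ℕ => Vn φ (n + 1))
    (hnorm : opNorm φ ≠ ⊤)
    (P : ℝ) (hP : IsGurevich φ P)
    (f : ℕ → SSeq → ℝ) (c C : ℝ) (hc : 0 < c) (hcC : c ≤ C)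
    (hf : ∀ n : ℕ, 1 ≤ n → ∀ y : SSeq, c ≤ f n y ∧ f n y ≤ C) :
    (∀ x : SSeq,
        Tendsto (fun n : ℕ => (1 / (n : ℝ)) * Real.log ((Lop φ)^[n] (f n) x))
          atTop (nhds P)) ∧
      ∀ x : SSeq,
        Tendsto (fun n : ℕ => (1 / (n : ℝ)) * Real.log ((Lop φ)^[n] (fun _ => 1) x))
          atTop (nhds P) :=
  ⟨fun x => main_aux hbdd hsum hnorm P hP f c C hc hcC hf x,
   fun x => main_aux hbdd hsum hnorm P hP (fun _ _ => 1) 1 1 one_pos le_rfl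
     (fun _ _ _ => ⟨le_rfl, le_rfl⟩) x⟩
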